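/- In the graph G constructed from a Set Cover instance, if A' ⊆ A is feasible, then the subfamily 𝒞 := {S ∈ 𝒮 | P_S ⊆ A'} is a set cover of U, i.e., ⋃_{S ∈ 𝒞} S = U. -/

import Mathlib

/-- Vertices of the graph constructed from a Set Cover instance with universe `U`,
family of sets indexed by `ι`, and path-length parameter `q`:
`item u` is `v_u`, `path i j` is `v^j_{S_i}`, and `sink` is `z`. -/
inductive Vtx (U ι : Type) (q : ℕ) : Type where
  | item : U → Vtx U ι q
  | path : ι → Fin (q + 1) → Vtx U ι q
  | sink : Vtx U ι q
  deriving DecidableEq, Fintype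

variable {U ι : Type} [Fintype U] [Fintype ι] [DecidableEq U] [DecidableEq ι]

/-- The arcs `A_U = {(v_u, v^0_S) | S ∈ 𝒮, u ∈ S}`. -/
def AU (Sets : ι → Finset U) (q : ℕ) : Finset (Vtx U ι q × Vtx U ι q) :=
  Finset.univ.biUnion fun i => (Sets i).image fun u => (Vtx.item u, Vtx.path i 0)

/-- The path `P_S = {(v^0_S,v^1_S), …, (v^{q-1}_S,v^q_S), (v^q_S, z)}` for `S = S_i`. -/
def Ppath (U ι : Type) [DecidableEq U] [DecidableEq ι] (q : ℕ) (i : ι) :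
    Finset (Vtx U ι q × Vtx U ι q) :=
  ((Finset.univ : Finset (Fin q)).image fun j =>
      ((Vtx.path i j.castSucc : Vtx U ι q), Vtx.path i j.succ)) ∪
    {(Vtx.path i (Fin.last q), Vtx.sink)}

/-- The arc set `A = A_U ∪ ⋃_{S ∈ 𝒮} P_S`. -/
def arcs (Sets : ι → Finset U) (q : ℕ) : Finset (Vtx U ι q × Vtx U ι q) :=
  AU Sets q ∪ Finset.univ.biUnion (Ppath U ι q)

/-- There is a directed path from `x` to `y` all of whose arcs lie in `A'`. -/
def Reaches {α : Type} (A' : Finset (α × α)) (x y : α) : Prop :=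
  Relation.ReflTransGen (fun a b => (a, b) ∈ A') x y

/-- `A' ⊆ A` is feasible if every `v_u` can reach `z` using only arcs of `A'`. -/
def Feasible {q : ℕ} (A' : Finset (Vtx U ι q × Vtx U ι q)) : Prop :=
  ∀ u : U, Reaches A' (Vtx.item u) Vtx.sink

/-- The number of arcs of `B` incident to `v` (in-degree plus out-degree). -/
def deg {α : Type} [DecidableEq α] (B : Finset (α × α)) (v : α) : ℕ :=
  (B.filter fun a => a.1 = v).card + (B.filter fun a => a.2 = v).card

/-- The linecard objective `obj_k(B) = Σ_v ⌈deg_B(v)/k⌉`. -/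
def obj {α : Type} [Fintype α] [DecidableEq α] (k : ℕ) (B : Finset (α × α)) : ℕ :=
  ∑ v : α, deg B v ⌈/⌉ k


lemma path_src_arc {Sets : ι → Finset U} {q : ℕ} {i : ι} {j : Fin (q+1)} {y : Vtx U ι q}
    (h : (Vtx.path i j, y) ∈ arcs Sets q) :
    (∃ j' : Fin q, j = j'.castSucc ∧ y = Vtx.path i j'.succ) ∨
      (j = Fin.last q ∧ y = Vtx.sink) := by
  simp [arcs, AU, Ppath, Prod.ext_iff] at h
  obtain ⟨a, ⟨⟨rfl, hj⟩, hy⟩ | ⟨j', ⟨rfl, hj⟩, hy⟩⟩ := h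
  · exact Or.inr ⟨hj, hy⟩
  · exact Or.inl ⟨j', hj.symm, hy.symm⟩

lemma item_src_arc {Sets : ι → Finset U} {q : ℕ} {u : U} {y : Vtx U ι q}
    (h : (Vtx.item u, y) ∈ arcs Sets q) :
    ∃ i : ι, y = Vtx.path i 0 ∧ u ∈ Sets i := by
  simp [arcs, AU, Ppath, Prod.ext_iff] at h
  obtain ⟨i, hv, hy⟩ := h
  exact ⟨i, hy.symm, hv⟩

lemma forced {Sets : ι → Finset U} {q : ℕ} {A' : Finset (Vtx U ι q × Vtx U ι q)}
    (hA' : A' ⊆ arcs Sets q) :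
    ∀ n (i : ι) (j : Fin (q+1)), q - (j : ℕ) = n →
      Reaches A' (Vtx.path i j) Vtx.sink →
      ((∀ j' : Fin q, (j : ℕ) ≤ (j' : ℕ) →
          (Vtx.path i j'.castSucc, Vtx.path i j'.succ) ∈ A') ∧
        (Vtx.path i (Fin.last q), Vtx.sink) ∈ A') := by
  intro n
  induction n using Nat.strong_induction_on with
  | _ n IH =>
    intro i j hn hreach
    rcases Relation.ReflTransGen.cases_head hreach with heq | ⟨c, hc, hreach'⟩
    · exact absurd heq (by simp)
    · rcases path_src_arc (hA' hc) with ⟨j', rfl, rfl⟩ | ⟨rfl, rfl⟩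
      · have hjq : (j' : ℕ) < q := j'.isLt
        have hmlt : q - (j'.succ : ℕ) < n := by
          simp only [Fin.coe_castSucc] at hn
          simp only [Fin.val_succ]
          omega
        have hIH := IH _ hmlt i j'.succ rfl hreach'
        refine ⟨fun j'' hle => ?_, hIH.2⟩
        rcases eq_or_lt_of_le (show (j' : ℕ) ≤ (j'' : ℕ) by simpa using hle) with heq | hlt
        · have : j'' = j' := Fin.ext heq.symm
          subst this; exact hc
        · exact hIH.1 j'' (by simp only [Fin.val_succ]; omega)
      · refine ⟨fun j' hle => absurd hle ?_, hc⟩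
        have := j'.isLt
        simp only [Fin.val_last, not_le]
        omega

/-- In the graph `G` constructed from a Set Cover instance, if `A' ⊆ A` is feasible, then
`𝒞 := {S ∈ 𝒮 | P_S ⊆ A'}` is a set cover of `U`, i.e., every `u ∈ U` lies in some set
of `𝒞`. -/
theorem feasible_gives_cover (Sets : ι → Finset U) (q : ℕ)
    (A' : Finset (Vtx U ι q × Vtx U ι q)) (hA' : A' ⊆ arcs Sets q)
    (hfeas : Feasible A') :
    ∀ u : U, ∃ i ∈ Finset.univ.filter (fun i : ι => Ppath U ι q i ⊆ A'), u ∈ Sets i := by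
  intro u
  rcases Relation.ReflTransGen.cases_head (hfeas u) with heq | ⟨c, hc, hreach'⟩
  · exact absurd heq (by simp)
  · obtain ⟨i, rfl, hu⟩ := item_src_arc (hA' hc)
    have hforced := forced hA' (q - ((0 : Fin (q+1)) : ℕ)) i 0 rfl hreach'
    refine ⟨i, ?_, hu⟩
    simp only [Finset.mem_filter, Finset.mem_univ, true_and]
    intro a ha
    simp only [Ppath, Finset.mem_union, Finset.mem_image, Finset.mem_univ, true_and,
      Finset.mem_singleton] at ha
    rcases ha with ⟨j', rfl⟩ | rfl
    · exact hforced.1 j' (by simp)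
    · exact hforced.2
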